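/- Let S be a unital ring, σ an injective endomorphism of S, δ a left σ-derivation, and f ∈ S[t;σ,δ] monic (or with invertible leading coefficient) of degree m ≥ 2. Then the Petit algebra S_f = S[t;σ,δ]/S[t;σ,δ]f, with multiplication g∘h = gh mod_r f, is a unital nonassociative ring, and it is a free left S-module of rank m with basis 1, t, …, t^{m−1}. -/
import Mathlib


open Finset

/-- `g` has degree `< n`: `g = ∑_{i < n} ι(aᵢ) tⁱ`. -/
def DegLT {S R : Type*} [Ring S] [Ring R] (ι : S →+* R) (t : R) (g : R) (n : ℕ) : Prop :=
  ∃ a : ℕ → S, g = ∑ i ∈ range n, ι (a i) * t ^ i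

/-- The multiplication of the Petit algebra `S_f`, relationally: `r = g∘h = g·h mod_r f`,
i.e. `r` has degree `< m` and `g·h = q·f + r` for some `q`. -/
def PetitMulRel {S R : Type*} [Ring S] [Ring R] (ι : S →+* R) (t : R) (f : R) (m : ℕ)
    (g h r : R) : Prop :=
  DegLT ι t r m ∧ ∃ q : R, g * h = q * f + r

section Aux
variable {S R : Type*} [Ring S] [Ring R] (ι : S →+* R) (t : R)

lemma degLT_zero (n : ℕ) : DegLT ι t (0:R) n := ⟨0, by simp⟩

lemma degLT_single {a : S} {i n : ℕ} (h : i < n) : DegLT ι t (ι a * t ^ i) n := by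
  refine ⟨fun j => if j = i then a else 0, ?_⟩
  rw [Finset.sum_eq_single i]
  · simp
  · intro j _ hj; simp [hj]
  · intro hi; exact absurd (Finset.mem_range.2 h) hi

lemma degLT_add {g h : R} {n : ℕ} (hg : DegLT ι t g n) (hh : DegLT ι t h n) :
    DegLT ι t (g + h) n := by
  obtain ⟨a, ha⟩ := hg; obtain ⟨c, hc⟩ := hh
  refine ⟨fun i => a i + c i, ?_⟩
  rw [ha, hc, ← Finset.sum_add_distrib]
  simp [map_add, add_mul]

lemma degLT_neg {g : R} {n : ℕ} (hg : DegLT ι t g n) : DegLT ι t (-g) n := by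
  obtain ⟨a, ha⟩ := hg
  refine ⟨fun i => - a i, ?_⟩
  rw [ha, ← Finset.sum_neg_distrib]
  simp [neg_mul]

lemma degLT_sub {g h : R} {n : ℕ} (hg : DegLT ι t g n) (hh : DegLT ι t h n) :
    DegLT ι t (g - h) n := by
  rw [sub_eq_add_neg]; exact degLT_add ι t hg (degLT_neg ι t hh)

lemma degLT_mono {g : R} {n n' : ℕ} (h : n ≤ n') (hg : DegLT ι t g n) : DegLT ι t g n' := by
  obtain ⟨a, ha⟩ := hg
  refine ⟨fun i => if i < n then a i else 0, ?_⟩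
  rw [ha, ← Finset.sum_subset (Finset.range_subset_range.2 h) (fun i _ hi => ?_)]
  · exact Finset.sum_congr rfl fun i hi => by simp [Finset.mem_range.1 hi]
  · simp only []
    rw [if_neg (by simpa using hi), map_zero, zero_mul]

lemma degLT_sum {γ : Type*} (s : Finset γ) (F : γ → R) (n : ℕ)
    (h : ∀ i ∈ s, DegLT ι t (F i) n) : DegLT ι t (∑ i ∈ s, F i) n :=
  Finset.sum_induction F (fun g => DegLT ι t g n) (fun _ _ => degLT_add ι t)
    (degLT_zero ι t n) h

lemma degLT_smul {g : R} {n : ℕ} (c : S) (hg : DegLT ι t g n) : DegLT ι t (ι c * g) n := by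
  obtain ⟨a, ha⟩ := hg
  refine ⟨fun i => c * a i, ?_⟩
  rw [ha, Finset.mul_sum]
  exact Finset.sum_congr rfl fun i _ => by rw [map_mul, mul_assoc]

variable (σ : S →+* S) (δ : S →+ S) (hrel : ∀ a : S, t * ι a = ι (σ a) * t + ι (δ a))

include hrel

lemma degLT_t_mul {g : R} {n : ℕ} (hg : DegLT ι t g n) : DegLT ι t (t * g) (n+1) := by
  obtain ⟨a, ha⟩ := hg
  rw [ha, Finset.mul_sum]
  refine degLT_sum ι t _ _ _ (fun i hi => ?_)
  have hi' := Finset.mem_range.1 hi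
  have : t * (ι (a i) * t ^ i) = ι (σ (a i)) * t ^ (i+1) + ι (δ (a i)) * t ^ i := by
    rw [← mul_assoc, hrel, add_mul, mul_assoc, ← pow_succ']
  rw [this]
  exact degLT_add ι t (degLT_single ι t (by omega)) (degLT_single ι t (by omega))

lemma tpow_mul_c (d : ℕ) (a : S) :
    ∃ w, DegLT ι t w d ∧ t ^ d * ι a = ι (σ^[d] a) * t ^ d + w := by
  induction d with
  | zero => exact ⟨0, degLT_zero ι t 0, by simp⟩
  | succ d IH =>
    obtain ⟨w, hw, hw2⟩ := IH
    refine ⟨ι (δ (σ^[d] a)) * t ^ d + t * w, ?_, ?_⟩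
    · exact degLT_add ι t (degLT_single ι t (by omega))
        (degLT_t_mul ι t σ δ hrel hw)
    · rw [pow_succ', mul_assoc, hw2, mul_add, ← mul_assoc, hrel, add_mul,
        mul_assoc, ← pow_succ', Function.iterate_succ_apply', ← add_assoc]

lemma degLT_tpow_mul (d : ℕ) : ∀ (h : R) (k : ℕ), DegLT ι t h k → DegLT ι t (t ^ d * h) (d + k) := by
  induction d with
  | zero => intro h k hh; simpa using hh
  | succ d IH =>
    intro h k hh
    rw [pow_succ, mul_assoc]
    have := IH (t * h) (k+1) (degLT_t_mul ι t σ δ hrel hh)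
    have e : d + (k+1) = (d+1) + k := by omega
    rwa [e] at this

lemma degLT_mul {g h : R} {n k : ℕ} (hg : DegLT ι t g n) (hh : DegLT ι t h (k+1)) :
    DegLT ι t (g * h) (n + k) := by
  obtain ⟨a, ha⟩ := hg
  rw [ha, Finset.sum_mul]
  refine degLT_sum ι t _ _ _ (fun i hi => ?_)
  have hi' := Finset.mem_range.1 hi
  rw [mul_assoc]
  refine degLT_smul ι t _ (degLT_mono ι t (show i + (k+1) ≤ n + k by omega)
    (degLT_tpow_mul ι t σ δ hrel i h (k+1) hh))

end Aux
section Aux2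
variable {S R : Type*} [Ring S] [Ring R] (ι : S →+* R) (t : R)

lemma isUnit_iterate (σ : S →+* S) {x : S} (h : IsUnit x) (d : ℕ) : IsUnit (σ^[d] x) := by
  induction d with
  | zero => simpa
  | succ d IH => rw [Function.iterate_succ_apply']; exact IH.map σ

lemma coeff_unique (hbasis : ∀ g : R, ∃! a : ℕ →₀ S, g = a.sum fun i c => ι c * t ^ i)
    (n : ℕ) (a c : ℕ → S)
    (h : ∑ i ∈ range n, ι (a i) * t ^ i = ∑ i ∈ range n, ι (c i) * t ^ i) :
    ∀ i < n, a i = c i := by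
  classical
  set F : ℕ → S → R := fun i x => ι x * t ^ i with hF
  have hF0 : ∀ i ∈ range n, F i 0 = 0 := fun i _ => by simp [hF]
  set a' : ℕ →₀ S := Finsupp.onFinset (range n) (fun i => if i < n then a i else 0)
    (fun i hi => Finset.mem_range.2 (by by_contra hc; simp [hc] at hi)) with ha'
  set c' : ℕ →₀ S := Finsupp.onFinset (range n) (fun i => if i < n then c i else 0)
    (fun i hi => Finset.mem_range.2 (by by_contra hc; simp [hc] at hi)) with hc'
  have hsa : a'.sum F = ∑ i ∈ range n, ι (a i) * t ^ i := by
    rw [Finsupp.sum_of_support_subset a' (Finsupp.support_onFinset_subset) F hF0]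
    exact Finset.sum_congr rfl fun i hi => by
      simp [ha', hF, Finset.mem_range.1 hi]
  have hsc : c'.sum F = ∑ i ∈ range n, ι (c i) * t ^ i := by
    rw [Finsupp.sum_of_support_subset c' (Finsupp.support_onFinset_subset) F hF0]
    exact Finset.sum_congr rfl fun i hi => by
      simp [hc', hF, Finset.mem_range.1 hi]
  have : a' = c' := by
    refine (hbasis (∑ i ∈ range n, ι (a i) * t ^ i)).unique hsa.symm ?_
    rw [hsc]; exact h
  intro i hi
  have := DFunLike.congr_fun this i
  simpa [ha', hc', hi] using this

lemma single_eq_sum {a : S} {i n : ℕ} (h : i < n) :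
    ι a * t ^ i = ∑ j ∈ range n, ι (if j = i then a else 0) * t ^ j := by
  rw [Finset.sum_eq_single i]
  · simp
  · intro j _ hj; simp [hj]
  · intro hi; exact absurd (Finset.mem_range.2 h) hi

end Aux2
section Aux3
variable {S R : Type*} [Ring S] [Ring R] (ι : S →+* R) (t : R)
variable (σ : S →+* S) (δ : S →+ S) (hrel : ∀ a : S, t * ι a = ι (σ a) * t + ι (δ a))
variable (f : R) (m : ℕ) (hm : 2 ≤ m) (b : ℕ → S)
variable (hf : f = ∑ i ∈ range m, ι (b i) * t ^ i + ι (b m) * t ^ m)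

include hrel hf

omit hrel in
lemma f_degLT : DegLT ι t f (m + 1) := by
  rw [hf]
  refine degLT_add ι t (degLT_sum ι t _ _ _ fun i hi =>
    degLT_single ι t (by have := Finset.mem_range.1 hi; omega)) (degLT_single ι t (by omega))

lemma f_lead (d : ℕ) (a : S) :
    ∃ w, DegLT ι t w (d + m) ∧ (ι a * t ^ d) * f
      = ι (a * σ^[d] (b m)) * t ^ (d + m) + w := by
  obtain ⟨w0, hw0, hw0e⟩ := tpow_mul_c ι t σ δ hrel d (b m)
  have hlow : DegLT ι t (∑ i ∈ range m, ι (b i) * t ^ i) m :=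
    degLT_sum ι t _ _ _ fun i hi => degLT_single ι t (Finset.mem_range.1 hi)
  have htpm : DegLT ι t (t ^ m) (m + 1) := by
    have := degLT_single ι t (a := (1 : S)) (i := m) (n := m + 1) (by omega)
    simpa using this
  have h1 : DegLT ι t (t ^ d * ∑ i ∈ range m, ι (b i) * t ^ i) (d + m) :=
    degLT_tpow_mul ι t σ δ hrel d _ m hlow
  have h2 : DegLT ι t (w0 * t ^ m) (d + m) := degLT_mul ι t σ δ hrel hw0 htpm
  have key : t ^ d * f = ι (σ^[d] (b m)) * t ^ (d + m)
      + (t ^ d * ∑ i ∈ range m, ι (b i) * t ^ i + w0 * t ^ m) := by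
    rw [hf, mul_add, ← mul_assoc, hw0e, add_mul, mul_assoc, ← pow_add]
    abel
  refine ⟨ι a * (t ^ d * ∑ i ∈ range m, ι (b i) * t ^ i + w0 * t ^ m), ?_, ?_⟩
  · exact degLT_smul ι t _ (degLT_add ι t h1 h2)
  · rw [mul_assoc, key, mul_add, ← mul_assoc, ← map_mul]

end Aux3
section Aux4
variable {S R : Type*} [Ring S] [Ring R] (ι : S →+* R) (t : R)
variable (σ : S →+* S) (δ : S →+ S) (hrel : ∀ a : S, t * ι a = ι (σ a) * t + ι (δ a))
variable (hbasis : ∀ g : R, ∃! a : ℕ →₀ S, g = a.sum fun i c => ι c * t ^ i)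
variable (f : R) (m : ℕ) (hm : 2 ≤ m) (b : ℕ → S)
variable (hf : f = ∑ i ∈ range m, ι (b i) * t ^ i + ι (b m) * t ^ m) (hlead : IsUnit (b m))

include hrel hf hlead in
lemma div_exists (n : ℕ) : ∀ p : R, DegLT ι t p n →
    ∃ q r : R, DegLT ι t r m ∧ p = q * f + r := by
  induction n with
  | zero => intro p hp
            obtain ⟨a, ha⟩ := hp
            exact ⟨0, 0, degLT_zero ι t m, by simp [ha]⟩
  | succ n IH =>
    intro p hp
    by_cases hnm : n + 1 ≤ m
    · exact ⟨0, p, degLT_mono ι t hnm hp, by simp⟩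
    · have hn : m ≤ n := by omega
      obtain ⟨a, ha⟩ := hp
      set d := n - m with hd
      have hdm : d + m = n := by omega
      obtain ⟨v, hv⟩ := (isUnit_iterate σ hlead d).exists_left_inv
      set c := a n * v with hc
      obtain ⟨w1, hw1, hw1e⟩ := f_lead ι t σ δ hrel f m b hf d c
      have hce : c * σ^[d] (b m) = a n := by
        rw [hc, mul_assoc, hv, mul_one]
      have hlead' : ι c * t ^ d * f = ι (a n) * t ^ n + w1 := by
        rw [hw1e, hce, hdm]
      have hp' : DegLT ι t (p - ι c * t ^ d * f) n := by
        rw [hlead', ha, Finset.sum_range_succ]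
        have : ∑ i ∈ range n, ι (a i) * t ^ i + ι (a n) * t ^ n - (ι (a n) * t ^ n + w1)
            = ∑ i ∈ range n, ι (a i) * t ^ i - w1 := by abel
        rw [this]
        refine degLT_sub ι t ⟨a, rfl⟩ ?_
        rw [← hdm]; exact hw1
      obtain ⟨q', r, hr, he⟩ := IH _ hp'
      refine ⟨ι c * t ^ d + q', r, hr, ?_⟩
      have : p = ι c * t ^ d * f + (p - ι c * t ^ d * f) := by abel
      rw [this, he, add_mul]
      abel

include hrel hbasis hf hlead in
lemma mul_f_eq_degLT {q w : R} (hw : DegLT ι t w m) (he : q * f = w) : q = 0 := by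
  classical
  obtain ⟨A, hA, -⟩ := hbasis q
  by_contra hq
  have hAne : A ≠ 0 := by rintro rfl; simp [Finsupp.sum] at hA; exact hq hA
  have hs : A.support.Nonempty := Finsupp.support_nonempty_iff.2 hAne
  set d := A.support.max' hs with hdd
  have hdmem : d ∈ A.support := A.support.max'_mem hs
  have hAd : A d ≠ 0 := Finsupp.mem_support_iff.1 hdmem
  set rest : R := ∑ i ∈ A.support.erase d, ι (A i) * t ^ i with hrest
  have hqe : q = ι (A d) * t ^ d + rest := by
    rw [hA, Finsupp.sum, ← Finset.add_sum_erase _ _ hdmem]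
  have hrestLT : DegLT ι t rest d := by
    refine degLT_sum ι t _ _ _ fun i hi => degLT_single ι t ?_
    have h1 := Finset.le_max' A.support i (Finset.mem_of_mem_erase hi)
    have h2 := Finset.ne_of_mem_erase hi
    omega
  obtain ⟨w1, hw1, hw1e⟩ := f_lead ι t σ δ hrel f m b hf d (A d)
  have hrf : DegLT ι t (rest * f) (d + m) :=
    degLT_mul ι t σ δ hrel hrestLT (f_degLT ι t f m b hf)
  have key : ι (A d * σ^[d] (b m)) * t ^ (d + m) = w - w1 - rest * f := by
    rw [← he, hqe, add_mul, hw1e]; abel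
  have hW : DegLT ι t (w - w1 - rest * f) (d + m) :=
    degLT_sub ι t (degLT_sub ι t (degLT_mono ι t (by omega) hw) hw1) hrf
  obtain ⟨C, hC⟩ := hW
  set C' : ℕ → S := fun i => if i = d + m then 0 else C i with hC'
  have hWe : w - w1 - rest * f = ∑ i ∈ range (d + m + 1), ι (C' i) * t ^ i := by
    rw [Finset.sum_range_succ, hC]
    have h0 : ι (C' (d + m)) * t ^ (d + m) = 0 := by simp [hC']
    rw [h0, add_zero]
    exact Finset.sum_congr rfl fun i hi => by
      have := Finset.mem_range.1 hi
      simp [hC', Nat.ne_of_lt this]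
  have hLe : ι (A d * σ^[d] (b m)) * t ^ (d + m)
      = ∑ j ∈ range (d + m + 1), ι (if j = d + m then A d * σ^[d] (b m) else 0) * t ^ j :=
    single_eq_sum ι t (by omega)
  have hcoeff := coeff_unique ι t hbasis (d + m + 1)
    (fun j => if j = d + m then A d * σ^[d] (b m) else 0) C'
    (by rw [← hLe, key, hWe]) (d + m) (by omega)
  simp [hC'] at hcoeff
  obtain ⟨v, hv⟩ := (isUnit_iterate σ hlead d).exists_right_inv
  have : A d = 0 := by
    have := congrArg (· * v) hcoeff
    simpa [mul_assoc, hv] using this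
  exact hAd this

end Aux4
/-- Let `S` be a unital ring, `σ` an injective endomorphism, `δ` a left
`σ`-derivation, and `f ∈ S[t;σ,δ]` of degree `m ≥ 2` with invertible leading coefficient.
The Petit algebra `S_f = S[t;σ,δ]/S[t;σ,δ]f` with multiplication `g∘h = gh mod_r f` is a
unital nonassociative ring (the product is well defined, `1` is a two-sided unit, and the
product is left and right distributive over addition), and `S_f` is a free left `S`-module
of rank `m` with basis `1, t, …, t^{m-1}`. -/
theorem petit_algebra_unital_free {S R : Type*} [Ring S] [Ring R]
    (σ : S →+* S) (hσ : Function.Injective σ) (δ : S →+ S)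
    (hδ : ∀ a b : S, δ (a * b) = σ a * δ b + δ a * b)
    (ι : S →+* R) (hι : Function.Injective ι) (t : R)
    (hrel : ∀ a : S, t * ι a = ι (σ a) * t + ι (δ a))
    (hbasis : ∀ g : R, ∃! a : ℕ →₀ S, g = a.sum fun i c => ι c * t ^ i)
    (f : R) (m : ℕ) (hm : 2 ≤ m) (b : ℕ → S)
    (hf : f = ∑ i ∈ range m, ι (b i) * t ^ i + ι (b m) * t ^ m) (hlead : IsUnit (b m)) :
    -- the multiplication is well defined on elements of degree < m
    (∀ g h : R, DegLT ι t g m → DegLT ι t h m → ∃! r : R, PetitMulRel ι t f m g h r) ∧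
    -- `1` is a two-sided unit
    (∀ g : R, DegLT ι t g m → PetitMulRel ι t f m 1 g g ∧ PetitMulRel ι t f m g 1 g) ∧
    -- left distributivity
    (∀ g h h' r r' : R, DegLT ι t g m → DegLT ι t h m → DegLT ι t h' m →
      PetitMulRel ι t f m g h r → PetitMulRel ι t f m g h' r' →
      PetitMulRel ι t f m g (h + h') (r + r')) ∧
    -- right distributivity
    (∀ g g' h r r' : R, DegLT ι t g m → DegLT ι t g' m → DegLT ι t h m →
      PetitMulRel ι t f m g h r → PetitMulRel ι t f m g' h r' →
      PetitMulRel ι t f m (g + g') h (r + r')) ∧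
    -- `S_f` is a free left `S`-module with basis `1, t, …, t^{m-1}`
    (∀ g : R, DegLT ι t g m ↔ ∃! a : Fin m → S, g = ∑ i : Fin m, ι (a i) * t ^ (i : ℕ)) := by
  classical
  have runiq : ∀ g h r r' : R, PetitMulRel ι t f m g h r → PetitMulRel ι t f m g h r' →
      r = r' := by
    rintro g h r r' ⟨hr, q, he⟩ ⟨hr', q', he'⟩
    have hqe : (q' - q) * f = r - r' := by
      rw [sub_mul]
      have : q' * f = g * h - r' := by rw [he']; abel
      rw [this, he]; abel
    have hq0 : q' - q = 0 :=
      mul_f_eq_degLT ι t σ δ hrel hbasis f m b hf hlead (degLT_sub ι t hr hr') hqe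
    have : r - r' = 0 := by rw [← hqe, hq0, zero_mul]
    exact sub_eq_zero.1 this
  refine ⟨?_, ?_, ?_, ?_, ?_⟩
  · -- well defined
    intro g h hg hh
    have hh' : DegLT ι t h ((m - 1) + 1) := by
      have : (m - 1) + 1 = m := by omega
      rwa [this]
    have hgh : DegLT ι t (g * h) (m + (m - 1)) := degLT_mul ι t σ δ hrel hg hh'
    obtain ⟨q, r, hr, he⟩ := div_exists ι t σ δ hrel f m b hf hlead (m + (m - 1)) _ hgh
    exact ⟨r, ⟨hr, q, he⟩, fun r' hrel' => runiq g h r' r hrel' ⟨hr, q, he⟩⟩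
  · -- unit
    intro g hg
    exact ⟨⟨hg, 0, by simp⟩, ⟨hg, 0, by simp⟩⟩
  · -- left distributivity
    rintro g h h' r r' _ _ _ ⟨hr, q, he⟩ ⟨hr', q', he'⟩
    exact ⟨degLT_add ι t hr hr', q + q', by rw [mul_add, he, he', add_mul]; abel⟩
  · -- right distributivity
    rintro g g' h r r' _ _ _ ⟨hr, q, he⟩ ⟨hr', q', he'⟩
    exact ⟨degLT_add ι t hr hr', q + q', by rw [add_mul, he, he', add_mul]; abel⟩
  · -- free module
    intro g
    constructor
    · rintro ⟨a, ha⟩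
      refine ⟨fun i => a i, ?_, ?_⟩
      · rw [ha, ← Fin.sum_univ_eq_sum_range (fun i => ι (a i) * t ^ i) m]
      · intro c hc
        set C : ℕ → S := fun i => if h : i < m then c ⟨i, h⟩ else 0 with hC
        have hce : g = ∑ i ∈ range m, ι (C i) * t ^ i := by
          rw [hc, ← Fin.sum_univ_eq_sum_range (fun i => ι (C i) * t ^ i) m]
          exact Finset.sum_congr rfl fun i _ => by simp [hC, i.isLt]
        have := coeff_unique ι t hbasis m C a (by rw [← hce, ha])
        funext i
        have h2 := this i i.isLt
        simpa [hC, i.isLt] using h2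
    · rintro ⟨c, hc, -⟩
      refine ⟨fun i => if h : i < m then c ⟨i, h⟩ else 0, ?_⟩
      rw [hc, ← Fin.sum_univ_eq_sum_range
        (fun i => ι (if h : i < m then c ⟨i, h⟩ else 0) * t ^ i) m]
      exact Finset.sum_congr rfl fun i _ => by simp [i.isLt]
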